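/- Under the SOE hypothesis, if the tolerance satisfies ε ≤ min{(1/3)ω_{1−α}(T), α·ω_{2−α}(1)}, then for every fixed n with 1 ≤ n ≤ N one has A^{(n)}_0 = a^{(n)}_0 and A^{(n)}_{n−k} ≥ (2/3)·a^{(n)}_{n−k} for 1 ≤ k ≤ n−1; in particular the fast kernel satisfies assumption A2 with π_A = 3/2. -/

import Mathlib

open Real Finset MeasureTheory

/-- The kernel `ω_μ(s) = s^(μ-1)/Γ(μ)`. -/
noncomputable def omegaK (μ s : ℝ) : ℝ := s ^ (μ - 1) / Real.Gamma μ

/-- The L1 kernel: `L1K α t n k` is `a^{(n)}_{n-k}`. -/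
noncomputable def L1K (α : ℝ) (t : ℕ → ℝ) (n k : ℕ) : ℝ :=
  (omegaK (2 - α) (t n - t (k - 1)) - omegaK (2 - α) (t n - t k)) / (t k - t (k - 1))

/-- The fast L1 kernel: `fastK α t Nq θ w n k` is `A^{(n)}_{n-k}`. -/
noncomputable def fastK (α : ℝ) (t : ℕ → ℝ) (Nq : ℕ) (θ w : ℕ → ℝ) (n k : ℕ) : ℝ :=
  if k = n then L1K α t n n
  else (∫ s in (t (k - 1))..(t k), ∑ ℓ ∈ Finset.range Nq, w ℓ * Real.exp (-(θ ℓ) * (t n - s))) /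
    (t k - t (k - 1))

lemma omega_integrable {α : ℝ} (hα1 : α < 1) (a b c : ℝ) :
    IntervalIntegrable (fun s => omegaK (1 - α) (c - s)) volume a b := by
  have h1 : IntervalIntegrable (fun u : ℝ => u ^ (1 - α - 1)) volume (c - a) (c - b) := by
    apply intervalIntegral.intervalIntegrable_rpow'
    linarith
  have h2 := (h1.comp_sub_left c).div_const (Real.Gamma (1 - α))
  simpa [omegaK, sub_sub_cancel] using h2

lemma omega_integral {α : ℝ} (hα0 : 0 < α) (hα1 : α < 1) {a b c : ℝ}
    (hab : a ≤ b) (hbc : b ≤ c) :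
    ∫ s in a..b, omegaK (1 - α) (c - s) =
      omegaK (2 - α) (c - a) - omegaK (2 - α) (c - b) := by
  have hΓpos : 0 < Real.Gamma (1 - α) := Real.Gamma_pos_of_pos (by linarith)
  have hΓ2 : Real.Gamma (2 - α) = (1 - α) * Real.Gamma (1 - α) := by
    rw [show (2 - α : ℝ) = (1 - α) + 1 by ring, Real.Gamma_add_one (by linarith)]
  simp only [omegaK]
  rw [intervalIntegral.integral_div]
  rw [intervalIntegral.integral_comp_sub_left (fun u : ℝ => u ^ (1 - α - 1)) c]
  rw [show (1 - α - 1 : ℝ) = -α by ring]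
  rw [integral_rpow (Or.inl (by linarith))]
  rw [hΓ2]
  have h1 : (1 - α : ℝ) ≠ 0 := by linarith
  have h2 : (2 - α - 1 : ℝ) = -α + 1 := by ring
  rw [h2, div_div, show (-α + 1 : ℝ) = 1 - α by ring, sub_div]

lemma mesh_mono {N : ℕ} {t : ℕ → ℝ} (hmesh : ∀ k, 1 ≤ k → k ≤ N → t (k - 1) < t k) :
    ∀ j, j ≤ N → ∀ i, i ≤ j → t i ≤ t j := by
  intro j
  induction j with
  | zero => intro _ i hi; simp [Nat.le_zero.mp hi]
  | succ m ih =>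
    intro hjN i hij
    rcases Nat.lt_succ_iff_lt_or_eq.mp (Nat.lt_succ_of_le hij) with h | h
    · have h1 : t i ≤ t m := ih (by omega) i (by omega)
      have h2 : t m < t (m + 1) := by
        have := hmesh (m + 1) (by omega) hjN
        simpa using this
      linarith
    · simp [h]

theorem fast_kernel_lower_bound_and_A2
    (T : ℝ) (hT : 0 < T) (N : ℕ) (hN : 1 ≤ N)
    (t : ℕ → ℝ) (ht0 : t 0 = 0) (htN : t N = T)
    (hmesh : ∀ k, 1 ≤ k → k ≤ N → t (k - 1) < t k)
    (α : ℝ) (hα0 : 0 < α) (hα1 : α < 1)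
    (Nq : ℕ) (hNq : 1 ≤ Nq) (θ w : ℕ → ℝ)
    (hθ : ∀ ℓ, ℓ < Nq → 0 < θ ℓ) (hw : ∀ ℓ, ℓ < Nq → 0 < w ℓ)
    (ε : ℝ) (hε : 0 < ε)
    (hSOE : ∀ s : ℝ, (∃ k, 1 ≤ k ∧ k ≤ N ∧ t k - t (k - 1) ≤ s) → s ≤ T →
      |omegaK (1 - α) s - ∑ ℓ ∈ Finset.range Nq, w ℓ * Real.exp (-(θ ℓ) * s)| ≤ ε)
    (hεb : ε ≤ min ((1 / 3) * omegaK (1 - α) T) (α * omegaK (2 - α) 1)) :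
    ∀ n, 1 ≤ n → n ≤ N →
      fastK α t Nq θ w n n = L1K α t n n ∧
      (∀ k, 1 ≤ k → k ≤ n - 1 → fastK α t Nq θ w n k ≥ (2 / 3) * L1K α t n k) ∧
      (∀ k, 1 ≤ k → k ≤ n → fastK α t Nq θ w n k ≥
        (1 / ((3 / 2) * (t k - t (k - 1)))) *
          ∫ s in (t (k - 1))..(t k), omegaK (1 - α) (t n - s)) := by
  intro n hn1 hnN
  have hΓpos : 0 < Real.Gamma (1 - α) := Real.Gamma_pos_of_pos (by linarith)
  have hmono := mesh_mono hmesh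
  have hεT : ε ≤ (1 / 3) * omegaK (1 - α) T := hεb.trans (min_le_left _ _)
  have htnT : t n ≤ T := htN ▸ hmono N le_rfl n hnN
  have hτpos : ∀ k, 1 ≤ k → k ≤ n → 0 < t k - t (k - 1) := fun k hk1 hkn =>
    sub_pos.mpr (hmesh k hk1 (hkn.trans hnN))
  have h0le : ∀ k, k ≤ N → 0 ≤ t k := fun k hk => ht0 ▸ hmono k hk 0 (Nat.zero_le _)
  -- L1K as an average of the integral of omegaK (1-α)
  have hL1 : ∀ k, 1 ≤ k → k ≤ n →
      L1K α t n k = (∫ s in (t (k - 1))..(t k), omegaK (1 - α) (t n - s)) / (t k - t (k - 1)) := by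
    intro k hk1 hkn
    rw [L1K, omega_integral hα0 hα1 (hmesh k hk1 (hkn.trans hnN)).le (hmono n hnN k hkn)]
  -- nonnegativity of the integral
  have hInn : ∀ k, 1 ≤ k → k ≤ n →
      0 ≤ ∫ s in (t (k - 1))..(t k), omegaK (1 - α) (t n - s) := by
    intro k hk1 hkn
    apply intervalIntegral.integral_nonneg (hmesh k hk1 (hkn.trans hnN)).le
    intro s hs
    have hs2 : s ≤ t n := hs.2.trans (hmono n hnN k hkn)
    exact div_nonneg (Real.rpow_nonneg (by linarith) _) hΓpos.le
  -- key estimate for k < n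
  have key : ∀ k, 1 ≤ k → k < n →
      fastK α t Nq θ w n k ≥ (2 / 3) * L1K α t n k := by
    intro k hk1 hkn
    set a := t (k - 1) with ha
    set b := t k with hb
    have hτ : 0 < b - a := hτpos k hk1 hkn.le
    have hab : a ≤ b := sub_nonneg.mp hτ.le
    have h0a : 0 ≤ a := h0le (k - 1) (by omega)
    have hbn : b < t n := by
      have h1 : t k ≤ t (n - 1) := hmono (n - 1) (by omega) k (by omega)
      have h2 : t (n - 1) < t n := hmesh n hn1 hnN
      linarith
    set I := ∫ s in a..b, omegaK (1 - α) (t n - s) with hI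
    -- pointwise SOE lower bound
    have hpt : ∀ s ∈ Set.Icc a b,
        omegaK (1 - α) (t n - s) - ε ≤
          ∑ ℓ ∈ Finset.range Nq, w ℓ * Real.exp (-(θ ℓ) * (t n - s)) := by
      intro s hs
      have hk1n : k + 1 ≤ n := hkn
      have hwit : t (k + 1) - t (k + 1 - 1) ≤ t n - s := by
        have h1 : t (k + 1) ≤ t n := hmono n hnN (k + 1) hk1n
        have h2 : t (k + 1 - 1) = t k := by norm_num
        rw [h2]
        have := hs.2
        linarith
      have hTb : t n - s ≤ T := by
        have := hs.1
        linarith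
      have := hSOE (t n - s) ⟨k + 1, by omega, by omega, hwit⟩ hTb
      have := abs_le.mp this
      linarith [this.1]
    -- integrability
    have hIsum : IntervalIntegrable
        (fun s => ∑ ℓ ∈ Finset.range Nq, w ℓ * Real.exp (-(θ ℓ) * (t n - s))) volume a b := by
      apply Continuous.intervalIntegrable
      fun_prop
    have hIω : IntervalIntegrable (fun s => omegaK (1 - α) (t n - s)) volume a b :=
      omega_integrable hα1 a b (t n)
    -- integral comparison
    have hcmp : I - (b - a) * ε ≤
        ∫ s in a..b, ∑ ℓ ∈ Finset.range Nq, w ℓ * Real.exp (-(θ ℓ) * (t n - s)) := by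
      have := intervalIntegral.integral_mono_on (μ := volume) hab
        (hIω.sub intervalIntegrable_const) hIsum hpt
      rw [intervalIntegral.integral_sub hIω intervalIntegrable_const,
        intervalIntegral.integral_const, smul_eq_mul] at this
      linarith
    -- lower bound on I
    have hIlb : (b - a) * omegaK (1 - α) T ≤ I := by
      have hpt2 : ∀ s ∈ Set.Icc a b, omegaK (1 - α) T ≤ omegaK (1 - α) (t n - s) := by
        intro s hs
        have h1 : 0 < t n - s := by linarith [hs.2]
        have h2 : t n - s ≤ T := by linarith [hs.1]
        have h3 : T ^ ((1 : ℝ) - α - 1) ≤ (t n - s) ^ ((1 : ℝ) - α - 1) := by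
          rw [show (1 : ℝ) - α - 1 = -α by ring]
          exact Real.rpow_le_rpow_of_nonpos h1 h2 (by linarith)
        exact div_le_div_of_nonneg_right h3 hΓpos.le |>.trans_eq rfl
      have := intervalIntegral.integral_mono_on (μ := volume) hab
        intervalIntegrable_const hIω hpt2
      rwa [intervalIntegral.integral_const, smul_eq_mul] at this
      -- done
    have hεI : (b - a) * ε ≤ (1 / 3) * I := by
      have h1 : (b - a) * ε ≤ (b - a) * ((1 / 3) * omegaK (1 - α) T) :=
        mul_le_mul_of_nonneg_left hεT hτ.le
      nlinarith
    have hnum : (2 / 3) * I ≤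
        ∫ s in a..b, ∑ ℓ ∈ Finset.range Nq, w ℓ * Real.exp (-(θ ℓ) * (t n - s)) := by
      linarith
    rw [ge_iff_le, hL1 k hk1 hkn.le, fastK, if_neg (by omega : k ≠ n)]
    rw [← ha, ← hb, ← hI, ← mul_div_assoc]
    exact div_le_div_of_nonneg_right hnum hτ.le |>.trans_eq rfl
  refine ⟨by rw [fastK, if_pos rfl], fun k hk1 hkn => key k hk1 (by omega), ?_⟩
  intro k hk1 hkn
  have hτ := hτpos k hk1 hkn
  set I := ∫ s in (t (k - 1))..(t k), omegaK (1 - α) (t n - s) with hI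
  have heq : (1 / ((3 / 2) * (t k - t (k - 1)))) * I = (2 / 3) * (I / (t k - t (k - 1))) := by
    field_simp
  rcases eq_or_lt_of_le hkn with h | h
  · subst h
    rw [ge_iff_le, heq, fastK, if_pos rfl, hL1 k hk1 le_rfl]
    have hInn' := hInn k hk1 le_rfl
    have : 0 ≤ I / (t k - t (k - 1)) := div_nonneg hInn' hτ.le
    linarith
  · have := key k hk1 h
    rw [ge_iff_le, heq, ← hL1 k hk1 h.le]
    exact this
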